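/- There exists a continuous map f from the space ℤ^ℕ (functions ℕ → ℤ with the product topology, ℤ discrete) to AF^ℕ with the weak topology such that f⁻¹(LF^ℕ) equals the set {a : ℕ → ℤ : ∃ n, ∀ m ≥ n, a(m) = 0} of eventually-zero sequences. Moreover, LF^ℕ is not a Gδ subset (a countable intersection of open sets) of AF^ℕ with the weak topology. -/

import Mathlib

-- Mutation of a quiver at a vertex `x`.
open Classical in
noncomputable def mutateFun {X : Type*} (x : X) (Q : X → X → ℤ) : X → X → ℤ :=
  fun v w =>
    if v = x ∨ w = x then - Q v w
    else Q v w + Q v x * max (Q x w) 0 + max (- Q v x) 0 * Q x w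

-- Restriction of a quiver to a set of vertices `V`.
open Classical in
noncomputable def restrictFun {X : Type*} (V : Set X) (Q : X → X → ℤ) : X → X → ℤ :=
  fun a b => if a ∈ V ∧ b ∈ V then Q a b else 0

-- Overfill of a quiver on a set of vertices `V`.
open Classical in
noncomputable def overfillFun {X : Type*} (V : Set X) (Q : X → X → ℤ) : X → X → ℤ :=
  fun a b => if a ∈ V ∨ b ∈ V then Q a b else 0

/-- The set of arrow finite quivers on `X`: skew-symmetric integer matrices. -/
def AF (X : Type*) : Type _ := {Q : X → X → ℤ // ∀ a b, Q a b = - Q b a}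

/-- The basic set `U_{Q,V}`. -/
def Uset {X : Type*} (Q : AF X) (V : Set X) : Set (AF X) :=
  {Q' | restrictFun V Q'.1 = restrictFun V Q.1}

/-- The basic set `W_{Q,V}`. -/
def Wset {X : Type*} (Q : AF X) (V : Set X) : Set (AF X) :=
  {Q' | overfillFun V Q'.1 = overfillFun V Q.1}

def UBasis (X : Type*) : Set (Set (AF X)) :=
  {U | ∃ (Q : AF X) (V : Set X), V.Finite ∧ U = Uset Q V}

def WBasis (X : Type*) : Set (Set (AF X)) :=
  {U | ∃ (Q : AF X) (V : Set X), V.Finite ∧ U = Wset Q V}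

/-- The weak topology on `AF X`, generated by the sets `U_{Q,V}` with `V` finite. -/
def weakTop (X : Type*) : TopologicalSpace (AF X) :=
  TopologicalSpace.generateFrom (UBasis X)

/-- The strong topology on `AF X`, generated by the sets `W_{Q,V}` with `V` finite. -/
def strongTop (X : Type*) : TopologicalSpace (AF X) :=
  TopologicalSpace.generateFrom (WBasis X)

/-- Locally finite quivers. -/
def LFset (X : Type*) : Set (AF X) := {Q | ∀ x : X, {y : X | Q.1 x y ≠ 0}.Finite}

/-- Finite quivers: those with finite support. -/
def FinSet (X : Type*) : Set (AF X) := {Q | {x : X | ∃ y, Q.1 x y ≠ 0}.Finite}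

open Set Topology Filter

section Aux

/-- Shift of a sequence, with value `0` at `0`. -/
def gval (a : ℕ → ℤ) : ℕ → ℤ
  | 0 => 0
  | (m+1) => a m

/-- Encoding of a sequence as a star-shaped quiver based at `0`. -/
noncomputable def encAF (a : ℕ → ℤ) : AF ℕ :=
  ⟨fun x y => (if x = 0 then gval a y else 0) - (if y = 0 then gval a x else 0),
   fun x y => by ring⟩

lemma encAF_zero (a : ℕ → ℤ) (y : ℕ) : (encAF a).1 0 y = gval a y := by
  cases y <;> simp [encAF, gval]

lemma encAF_succ (a : ℕ → ℤ) (x y : ℕ) (hx : x ≠ 0) (hy : y ≠ 0) :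
    (encAF a).1 x y = 0 := by
  simp [encAF, hx, hy]

lemma cont_gval (k : ℕ) : Continuous (fun a : ℕ → ℤ => gval a k) := by
  cases k with
  | zero => exact continuous_const
  | succ m => exact continuous_apply m

lemma cont_coord (x y : ℕ) : Continuous (fun a : ℕ → ℤ => (encAF a).1 x y) := by
  simp only [encAF]
  apply Continuous.sub
  · split_ifs
    · exact cont_gval y
    · exact continuous_const
  · split_ifs
    · exact cont_gval x
    · exact continuous_const

lemma isGδ_preimage {α β : Type*} [TopologicalSpace α] [tβ : TopologicalSpace β]
    {f : α → β} {s : Set β} (hs : IsGδ s) (hf : Continuous f) : IsGδ (f ⁻¹' s) := by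
  obtain ⟨T, hTo, hTc, rfl⟩ := hs
  refine ⟨(fun t => f ⁻¹' t) '' T, ?_, hTc.image _, ?_⟩
  · rintro t ⟨u, hu, rfl⟩
    exact (hTo u hu).preimage hf
  · rw [sInter_image, preimage_sInter]

/-- The set of eventually zero sequences. -/
def Ezero : Set (ℕ → ℤ) := {a : ℕ → ℤ | ∃ n : ℕ, ∀ m ≥ n, a m = 0}

lemma encAF_preimage : encAF ⁻¹' (LFset ℕ) = Ezero := by
  ext a
  constructor
  · intro h
    have h0 := h 0
    have hsub : {m : ℕ | a m ≠ 0} ⊆ (fun m => m + 1) ⁻¹' {y : ℕ | (encAF a).1 0 y ≠ 0} := by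
      intro m hm
      simpa [encAF_zero, gval] using hm
    have hfin : {m : ℕ | a m ≠ 0}.Finite := by
      refine Set.Finite.subset (h0.preimage ?_) hsub
      exact Function.Injective.injOn (fun m n h => by omega)
    obtain ⟨n, hn⟩ := hfin.bddAbove
    refine ⟨n + 1, fun m hm => ?_⟩
    by_contra h'
    exact absurd (hn (show m ∈ {m : ℕ | a m ≠ 0} from h')) (by omega)
  · rintro ⟨n, hn⟩ x
    cases x with
    | zero =>
      refine Set.Finite.subset (Set.finite_Iio (n + 1)) ?_
      intro y hy
      simp only [mem_setOf_eq, encAF_zero] at hy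
      by_contra hlt
      simp only [mem_Iio, not_lt] at hlt
      obtain ⟨m, rfl⟩ : ∃ m, y = m + 1 := ⟨y - 1, by omega⟩
      exact hy (by simpa [gval] using hn m (by omega))
    | succ x =>
      refine Set.Finite.subset (Set.finite_singleton 0) ?_
      intro y hy
      simp only [mem_setOf_eq] at hy
      by_contra hy0
      exact hy (encAF_succ a (x + 1) y (by omega) (by simpa using hy0))

lemma encAF_continuous :
    @Continuous _ _ Pi.topologicalSpace (weakTop ℕ) encAF := by
  rw [weakTop, continuous_generateFrom_iff]
  rintro U ⟨Q, V, hV, rfl⟩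
  have hU : encAF ⁻¹' Uset Q V
      = ⋂ x ∈ V, ⋂ y ∈ V, {a : ℕ → ℤ | (encAF a).1 x y = Q.1 x y} := by
    ext a
    simp only [mem_preimage, Uset, mem_setOf_eq, mem_iInter]
    constructor
    · intro h x hx y hy
      have := congrFun (congrFun h x) y
      simpa [restrictFun, hx, hy] using this
    · intro h
      funext x y
      by_cases hx : x ∈ V ∧ y ∈ V
      · simpa [restrictFun, hx.1, hx.2] using h x hx.1 y hx.2
      · simp [restrictFun, hx]
  rw [hU]
  refine hV.isOpen_biInter fun x _ => hV.isOpen_biInter fun y _ => ?_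
  exact (isOpen_discrete {Q.1 x y}).preimage (cont_coord x y)

lemma dense_Ezero : Dense Ezero := by
  intro a
  have htend : Tendsto (fun k => fun m => if m < k then a m else 0) atTop (𝓝 a) := by
    refine tendsto_pi_nhds.2 fun m => ?_
    refine Tendsto.congr' ?_ tendsto_const_nhds
    filter_upwards [eventually_ge_atTop (m + 1)] with k hk
    simp [show m < k by omega]
  exact mem_closure_of_tendsto htend (Eventually.of_forall fun k =>
    ⟨k, fun m hm => by simp [show ¬ m < k by omega]⟩)

/-- The set of sequences with infinitely many nonzero entries. -/
def Dinf : Set (ℕ → ℤ) := ⋂ n : ℕ, ⋃ m : ℕ, ⋃ _ : m ≥ n, {a : ℕ → ℤ | a m ≠ 0}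

lemma isGδ_Dinf : IsGδ Dinf := by
  refine IsGδ.iInter_of_isOpen fun n => ?_
  refine isOpen_iUnion fun m => isOpen_iUnion fun _ => ?_
  have h : {a : ℕ → ℤ | a m ≠ 0} = (fun a : ℕ → ℤ => a m) ⁻¹' {z : ℤ | z ≠ 0} := rfl
  rw [h]
  exact (isOpen_discrete _).preimage (continuous_apply m)

lemma dense_Dinf : Dense Dinf := by
  intro a
  have htend : Tendsto (fun k => fun m => if m < k then a m else 1) atTop (𝓝 a) := by
    refine tendsto_pi_nhds.2 fun m => ?_
    refine Tendsto.congr' ?_ tendsto_const_nhds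
    filter_upwards [eventually_ge_atTop (m + 1)] with k hk
    simp [show m < k by omega]
  refine mem_closure_of_tendsto htend (Eventually.of_forall fun k => ?_)
  refine mem_iInter.2 fun n => mem_iUnion.2 ⟨n + k, mem_iUnion.2 ⟨by omega, ?_⟩⟩
  simp [show ¬ n + k < k by omega]

lemma Ezero_inter_Dinf : Ezero ∩ Dinf = ∅ := by
  ext a
  simp only [mem_inter_iff, mem_empty_iff_false, iff_false]
  rintro ⟨⟨n, hn⟩, hD⟩
  obtain ⟨m, hm⟩ := mem_iUnion.1 (mem_iInter.1 hD n)
  obtain ⟨hmn, hma⟩ := mem_iUnion.1 hm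
  exact hma (hn m hmn)

end Aux

/-- There is a continuous map `f : ℤ^ℕ → AF^ℕ` (weak topology) pulling back `LF^ℕ`
to the set of eventually-zero sequences; moreover `LF^ℕ` is not Gδ in the weak topology. -/
theorem lf_sigma02_hard_not_gdelta :
    (∃ f : (ℕ → ℤ) → AF ℕ,
      @Continuous _ _ (@Pi.topologicalSpace ℕ (fun _ => ℤ) (fun _ => ⊥)) (weakTop ℕ) f ∧
      f ⁻¹' (LFset ℕ) = {a : ℕ → ℤ | ∃ n : ℕ, ∀ m ≥ n, a m = 0}) ∧
    ¬ @IsGδ (AF ℕ) (weakTop ℕ) (LFset ℕ) := by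
  have hdom : (@Pi.topologicalSpace ℕ (fun _ => ℤ) (fun _ => ⊥))
      = (Pi.topologicalSpace : TopologicalSpace (ℕ → ℤ)) := rfl
  constructor
  · exact ⟨encAF, hdom ▸ encAF_continuous, encAF_preimage⟩
  · intro hGδ
    have hE : IsGδ Ezero := by
      rw [← encAF_preimage]
      exact @isGδ_preimage _ _ _ (weakTop ℕ) _ _ hGδ encAF_continuous
    haveI : BaireSpace (ℕ → ℤ) := by
      letI := TopologicalSpace.upgradeIsCompletelyMetrizable (ℕ → ℤ)
      infer_instance
    have hd : Dense (Ezero ∩ Dinf) :=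
      Dense.inter_of_Gδ hE isGδ_Dinf dense_Ezero dense_Dinf
    rw [Ezero_inter_Dinf] at hd
    have := hd (fun _ => 0)
    rw [closure_empty] at this
    exact this
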